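/- For 0 < ε ≤ 1, define x_k = ε(1+ε)^k for every natural number k ≥ 0, and let 𝒳_ε = ({x_k : k ∈ ℕ} ∪ {1 − x_k : k ∈ ℕ}) ∩ [0,1]. Then for every convex function f : [0,1] → [0,1], inf_{x ∈ 𝒳_ε} f(x) ≤ inf_{x ∈ [0,1]} f(x) + 2ε. -/
import Mathlib

/-- Convexity bound using the left endpoint 0: if `y` is slightly to the left of `x`,
then `f y ≤ f x + ε`. -/
lemma grid_conv_left (ε : ℝ) (hε0 : 0 < ε)
    (f : ℝ → ℝ) (hf : ConvexOn ℝ (Set.Icc (0:ℝ) 1) f)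
    (hf01 : ∀ t ∈ Set.Icc (0:ℝ) 1, f t ∈ Set.Icc (0:ℝ) 1)
    (x y : ℝ) (hy0 : 0 ≤ y) (hyx : y ≤ x) (hx1 : x ≤ 1)
    (h : x - y ≤ ε * x) : f y ≤ f x + ε := by
  rcases eq_or_lt_of_le (le_trans hy0 hyx) with hx0 | hx0
  · have : y = x := le_antisymm hyx (hx0 ▸ hy0)
    rw [this]; linarith
  · set s : ℝ := (x - y) / x with hs
    have hs0 : 0 ≤ s := div_nonneg (by linarith) hx0.le
    have hs1 : s ≤ 1 := by
      rw [div_le_one hx0]; linarith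
    have hsε : s ≤ ε := by
      rw [div_le_iff₀ hx0]; linarith
    have hxmem : x ∈ Set.Icc (0:ℝ) 1 := ⟨hx0.le, hx1⟩
    have h0mem : (0:ℝ) ∈ Set.Icc (0:ℝ) 1 := ⟨le_refl _, zero_le_one⟩
    have hcomb := hf.2 h0mem hxmem hs0 (by linarith : (0:ℝ) ≤ 1 - s) (by ring)
    have hsx : s * x = x - y := by rw [hs, div_mul_cancel₀ _ hx0.ne']
    have hyeq : s • (0:ℝ) + (1 - s) • x = y := by
      simp only [smul_eq_mul]
      linear_combination -hsx
    rw [hyeq] at hcomb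
    have hf0 := hf01 0 h0mem
    have hfx := hf01 x hxmem
    simp only [smul_eq_mul] at hcomb
    nlinarith [hf0.1, hf0.2, hfx.1, hfx.2]

/-- Convexity bound using the right endpoint 1: if `y` is slightly to the right of `x`,
then `f y ≤ f x + ε`. -/
lemma grid_conv_right (ε : ℝ) (hε0 : 0 < ε)
    (f : ℝ → ℝ) (hf : ConvexOn ℝ (Set.Icc (0:ℝ) 1) f)
    (hf01 : ∀ t ∈ Set.Icc (0:ℝ) 1, f t ∈ Set.Icc (0:ℝ) 1)
    (x y : ℝ) (hx0 : 0 ≤ x) (hxy : x ≤ y) (hy1 : y ≤ 1)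
    (h : y - x ≤ ε * (1 - x)) : f y ≤ f x + ε := by
  rcases eq_or_lt_of_le (le_trans hxy hy1) with hx1 | hx1
  · have : y = x := le_antisymm (hx1 ▸ hy1) hxy
    rw [this]; linarith
  · set s : ℝ := (y - x) / (1 - x) with hs
    have h1x : (0:ℝ) < 1 - x := by linarith
    have hs0 : 0 ≤ s := div_nonneg (by linarith) h1x.le
    have hs1 : s ≤ 1 := by
      rw [div_le_one h1x]; linarith
    have hsε : s ≤ ε := by
      rw [div_le_iff₀ h1x]; linarith
    have hxmem : x ∈ Set.Icc (0:ℝ) 1 := ⟨hx0, by linarith⟩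
    have h1mem : (1:ℝ) ∈ Set.Icc (0:ℝ) 1 := ⟨zero_le_one, le_refl _⟩
    have hcomb := hf.2 hxmem h1mem (by linarith : (0:ℝ) ≤ 1 - s) hs0 (by ring)
    have hsx : s * (1 - x) = y - x := by rw [hs, div_mul_cancel₀ _ h1x.ne']
    have hyeq : (1 - s) • x + s • (1:ℝ) = y := by
      simp only [smul_eq_mul]
      linear_combination hsx
    rw [hyeq] at hcomb
    have hf1 := hf01 1 h1mem
    have hfx := hf01 x hxmem
    simp only [smul_eq_mul] at hcomb
    nlinarith [hf1.1, hf1.2, hfx.1, hfx.2]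

/-- Existence of a geometric grid point just below `x` (for `ε ≤ x`). -/
lemma grid_exists (ε x : ℝ) (hε0 : 0 < ε) (hεx : ε ≤ x) :
    ∃ k : ℕ, ε * (1 + ε) ^ k ≤ x ∧ x ≤ ε * (1 + ε) ^ (k + 1) := by
  classical
  have h1ε : (1:ℝ) < 1 + ε := by linarith
  obtain ⟨N, hN⟩ := pow_unbounded_of_one_lt (x / ε) h1ε
  have hPN : x < ε * (1 + ε) ^ N := by
    rw [div_lt_iff₀ hε0] at hN; linarith
  have hex : ∃ n : ℕ, x < ε * (1 + ε) ^ n := ⟨N, hPN⟩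
  set k := Nat.find hex with hk
  have hkspec : x < ε * (1 + ε) ^ k := Nat.find_spec hex
  have hk0 : k ≠ 0 := by
    intro h
    rw [h] at hkspec
    simp at hkspec
    linarith
  obtain ⟨m, hm⟩ := Nat.exists_eq_succ_of_ne_zero hk0
  have hmin : ¬ (x < ε * (1 + ε) ^ m) := Nat.find_min hex (by omega)
  push_neg at hmin
  refine ⟨m, hmin, ?_⟩
  rw [hm] at hkspec
  exact hkspec.le

/-- Part (ii) of the geometric-grid lemma: the grid
`𝒳_ε = ({ε(1+ε)^k} ∪ {1 − ε(1+ε)^k}) ∩ [0,1]` approximates the minimum of every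
convex function `f : [0,1] → [0,1]` to within `2ε`. -/
theorem geometric_grid_approx
    (ε : ℝ) (hε0 : 0 < ε) (hε1 : ε ≤ 1)
    (𝒳 : Set ℝ)
    (h𝒳 : 𝒳 = ((Set.range fun k : ℕ => ε * (1 + ε) ^ k) ∪
        (Set.range fun k : ℕ => 1 - ε * (1 + ε) ^ k)) ∩ Set.Icc 0 1)
    (f : ℝ → ℝ) (hf : ConvexOn ℝ (Set.Icc (0:ℝ) 1) f)
    (hf01 : ∀ t ∈ Set.Icc (0:ℝ) 1, f t ∈ Set.Icc (0:ℝ) 1) :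
    sInf (f '' 𝒳) ≤ sInf (f '' Set.Icc (0:ℝ) 1) + 2 * ε := by
  have h𝒳sub : 𝒳 ⊆ Set.Icc (0:ℝ) 1 := by rw [h𝒳]; exact Set.inter_subset_right
  have hbddA : BddBelow (f '' 𝒳) := by
    refine ⟨0, ?_⟩
    rintro a ⟨y, hy, rfl⟩
    exact (hf01 y (h𝒳sub hy)).1
  have hBne : (f '' Set.Icc (0:ℝ) 1).Nonempty :=
    ⟨f 0, 0, ⟨le_refl _, zero_le_one⟩, rfl⟩
  -- key step: every point of [0,1] has a nearby grid point
  have key : ∀ x ∈ Set.Icc (0:ℝ) 1, sInf (f '' 𝒳) ≤ f x + 2 * ε := by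
    intro x hx
    obtain ⟨hx0, hx1⟩ := hx
    suffices h : ∃ y ∈ 𝒳, f y ≤ f x + ε by
      obtain ⟨y, hy𝒳, hfy⟩ := h
      have : sInf (f '' 𝒳) ≤ f y := csInf_le hbddA ⟨y, hy𝒳, rfl⟩
      linarith
    rcases le_or_gt x (1/2) with hhalf | hhalf
    · rcases lt_or_ge x ε with hcase | hcase
      · -- x < ε : use the grid point ε
        refine ⟨ε, ?_, ?_⟩
        · rw [h𝒳]
          exact ⟨Or.inl ⟨0, by simp⟩, ⟨hε0.le, hε1⟩⟩
        · exact grid_conv_right ε hε0 f hf hf01 x ε hx0 hcase.le hε1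
            (by nlinarith)
      · -- ε ≤ x : use the grid point ε(1+ε)^k just below x
        obtain ⟨k, hk1, hk2⟩ := grid_exists ε x hε0 hcase
        set y := ε * (1 + ε) ^ k with hy
        have hy0 : 0 < y := by positivity
        refine ⟨y, ?_, ?_⟩
        · rw [h𝒳]
          exact ⟨Or.inl ⟨k, rfl⟩, ⟨hy0.le, le_trans hk1 hx1⟩⟩
        · refine grid_conv_left ε hε0 f hf hf01 x y hy0.le hk1 hx1 ?_
          have : x ≤ y + ε * y := by
            have : ε * (1 + ε) ^ (k + 1) = y + ε * y := by rw [hy]; ring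
            linarith [this ▸ hk2]
          nlinarith
    · rcases lt_or_ge (1 - x) ε with hcase | hcase
      · -- 1 - x < ε : use the grid point 1 - ε
        refine ⟨1 - ε, ?_, ?_⟩
        · rw [h𝒳]
          refine ⟨Or.inr ⟨0, by simp⟩, ⟨by linarith, by linarith⟩⟩
        · exact grid_conv_left ε hε0 f hf hf01 x (1 - ε) (by linarith)
            (by linarith) hx1 (by nlinarith)
      · -- ε ≤ 1 - x : use the grid point 1 - ε(1+ε)^k with ε(1+ε)^k just below 1-x
        obtain ⟨k, hk1, hk2⟩ := grid_exists ε (1 - x) hε0 hcase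
        set z := ε * (1 + ε) ^ k with hz
        have hz0 : 0 < z := by positivity
        refine ⟨1 - z, ?_, ?_⟩
        · rw [h𝒳]
          exact ⟨Or.inr ⟨k, rfl⟩, ⟨by linarith, by linarith⟩⟩
        · refine grid_conv_right ε hε0 f hf hf01 x (1 - z) hx0 (by linarith)
            (by linarith) ?_
          have : 1 - x ≤ z + ε * z := by
            have : ε * (1 + ε) ^ (k + 1) = z + ε * z := by rw [hz]; ring
            linarith [this ▸ hk2]
          nlinarith
  have hfinal : sInf (f '' 𝒳) - 2 * ε ≤ sInf (f '' Set.Icc (0:ℝ) 1) := by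
    refine le_csInf hBne ?_
    rintro b ⟨x, hx, rfl⟩
    linarith [key x hx]
  linarith
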